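/- Let (X,d) be a uniformly locally finite hyperbolic graph. There exist ε > 0 and β > 0 such that for all x, y ∈ X and every path x = x₀, x₁, …, x_n = y with d(x_i, x_{i+1}) = 1, one has ∑_{i=0}^{n−1} e^{−ε·d(x_i, géod(x,y))} ≥ β·d(x,y). -/

import Mathlib

/-- The set of points on geodesics from `x` to `y` in a graph. -/
def geodSet {V : Type*} (Γ : SimpleGraph V) (x y : V) : Set V :=
  {z : V | Γ.dist x z + Γ.dist z y = Γ.dist x y}

/-- The distance from `z` to the set `géod(x,y)`. -/
noncomputable def dGeod {V : Type*} (Γ : SimpleGraph V) (x y z : V) : ℕ :=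
  sInf ((fun w => Γ.dist z w) '' geodSet Γ x y)

namespace Stmt11Aux

open Finset

variable {V : Type*} (Γ : SimpleGraph V)

/-- The Gromov product `(u|v)_z`, as a real number. -/
noncomputable def gp (z u v : V) : ℝ :=
  ((Γ.dist u z : ℝ) + (Γ.dist v z : ℝ) - (Γ.dist u v : ℝ)) / 2

lemma gp_le_left (hconn : Γ.Connected) (z u v : V) :
    gp Γ z u v ≤ (Γ.dist u z : ℝ) := by
  have h : Γ.dist v z ≤ Γ.dist v u + Γ.dist u z := hconn.dist_triangle
  have h2 : Γ.dist v u = Γ.dist u v := Γ.dist_comm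
  rw [h2] at h
  have h' : (Γ.dist v z : ℝ) ≤ (Γ.dist u v : ℝ) + (Γ.dist u z : ℝ) := by
    exact_mod_cast h
  unfold gp
  linarith

lemma gp_le_right (hconn : Γ.Connected) (z u v : V) :
    gp Γ z u v ≤ (Γ.dist v z : ℝ) := by
  have h : Γ.dist u z ≤ Γ.dist u v + Γ.dist v z := hconn.dist_triangle
  have h' : (Γ.dist u z : ℝ) ≤ (Γ.dist u v : ℝ) + (Γ.dist v z : ℝ) := by
    exact_mod_cast h
  unfold gp
  linarith

lemma gp_self (z u : V) : gp Γ z u u = (Γ.dist u z : ℝ) := by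
  unfold gp
  rw [Γ.dist_self]
  push_cast
  ring

/-- The four point condition, in Gromov product form. -/
lemma gp_min {δ : ℝ}
    (h4 : ∀ a b c d : V,
      (Γ.dist a c : ℝ) + Γ.dist b d ≤
        max ((Γ.dist a d : ℝ) + Γ.dist b c) ((Γ.dist a b : ℝ) + Γ.dist c d) + δ)
    (z u v w : V) :
    min (gp Γ z u v) (gp Γ z v w) - δ / 2 ≤ gp Γ z u w := by
  have H := h4 u v w z
  have hm1 := min_le_left (gp Γ z u v) (gp Γ z v w)
  have hm2 := min_le_right (gp Γ z u v) (gp Γ z v w)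
  have hc1 : (Γ.dist w z : ℝ) = (Γ.dist z w : ℝ) := by
    norm_cast; exact Γ.dist_comm
  rcases max_choice ((Γ.dist u z : ℝ) + Γ.dist v w) ((Γ.dist u v : ℝ) + Γ.dist w z)
    with hmax | hmax <;> rw [hmax] at H <;> unfold gp at * <;>
    [(have hc2 : (Γ.dist v w : ℝ) = (Γ.dist w v : ℝ) := by norm_cast; exact Γ.dist_comm);
     skip] <;> first
  | (rw [hc2] at H; linarith)
  | linarith

/-- The chain lemma (Frink-type metrization argument) for the quasi-metric
`exp (-ε (·|·)_z)`. -/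
lemma chain (hconn : Γ.Connected) {δ ε : ℝ}
    (h4 : ∀ a b c d : V,
      (Γ.dist a c : ℝ) + Γ.dist b d ≤
        max ((Γ.dist a d : ℝ) + Γ.dist b c) ((Γ.dist a b : ℝ) + Γ.dist c d) + δ)
    (hδ0 : 0 ≤ δ) (hε : 0 < ε) (hεδ : ε * δ ≤ Real.log 2) (z : V) (w : ℕ → V) :
    ∀ N a b : ℕ, a < b → b ≤ a + N →
      Real.exp (-ε * gp Γ z (w a) (w b)) ≤
        2 * ∑ i ∈ Finset.Ico a b, Real.exp (-ε * gp Γ z (w i) (w (i + 1))) := by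
  -- the quasi-metric inequality
  have hKpos : (0:ℝ) < Real.exp (ε * δ / 2) := Real.exp_pos _
  have hK1 : (1:ℝ) ≤ Real.exp (ε * δ / 2) := Real.one_le_exp (by positivity)
  have hK2 : Real.exp (ε * δ / 2) * Real.exp (ε * δ / 2) ≤ 2 := by
    rw [← Real.exp_add]
    have h' : ε * δ / 2 + ε * δ / 2 = ε * δ := by ring
    rw [h']
    calc Real.exp (ε * δ) ≤ Real.exp (Real.log 2) := Real.exp_le_exp.2 hεδ
      _ = 2 := Real.exp_log (by norm_num)
  have quasi : ∀ u v w' : V,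
      Real.exp (-ε * gp Γ z u w') ≤ Real.exp (ε * δ / 2) *
        max (Real.exp (-ε * gp Γ z u v)) (Real.exp (-ε * gp Γ z v w')) := by
    intro u v w'
    have h := gp_min Γ h4 z u v w'
    have h1 : Real.exp (-ε * gp Γ z u w') ≤
        Real.exp (ε * δ / 2 + (-ε * min (gp Γ z u v) (gp Γ z v w'))) := by
      apply Real.exp_le_exp.2
      have hmul : 0 ≤ ε * (gp Γ z u w' - (min (gp Γ z u v) (gp Γ z v w') - δ / 2)) :=
        mul_nonneg hε.le (by linarith)
      nlinarith
    rw [Real.exp_add] at h1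
    refine h1.trans ?_
    apply mul_le_mul_of_nonneg_left _ hKpos.le
    rcases le_total (gp Γ z u v) (gp Γ z v w') with hc | hc
    · rw [min_eq_left hc]
      exact le_max_left _ _
    · rw [min_eq_right hc]
      exact le_max_right _ _
  intro N
  induction N with
  | zero => intro a b h1 h2; omega
  | succ N ih =>
    intro a b hab hle
    set t : ℕ → ℝ := fun i => Real.exp (-ε * gp Γ z (w i) (w (i + 1))) with ht
    have htpos : ∀ i, 0 < t i := fun i => Real.exp_pos _
    set T := ∑ i ∈ Finset.Ico a b, t i with hT
    have hTpos : 0 < T :=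
      Finset.sum_pos (fun i _ => htpos i) ⟨a, Finset.mem_Ico.2 ⟨le_refl a, hab⟩⟩
    have hsingle : ∀ j, a ≤ j → j < b → t j ≤ T := by
      intro j hj1 hj2
      exact Finset.single_le_sum (fun i _ => (htpos i).le)
        (Finset.mem_Ico.2 ⟨hj1, hj2⟩)
    -- choose the splitting point m
    have hSne : ((Finset.Ico a b).filter
        (fun m => ∑ i ∈ Finset.Ico a m, t i ≤ T / 2)).Nonempty := by
      refine ⟨a, Finset.mem_filter.2 ⟨Finset.mem_Ico.2 ⟨le_refl a, hab⟩, ?_⟩⟩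
      rw [Finset.Ico_self, Finset.sum_empty]
      positivity
    set S := (Finset.Ico a b).filter (fun m => ∑ i ∈ Finset.Ico a m, t i ≤ T / 2)
      with hS
    set m := S.max' hSne with hm
    have hmS : m ∈ S := S.max'_mem hSne
    obtain ⟨hmIco, hmT⟩ := Finset.mem_filter.1 hmS
    have ham : a ≤ m := (Finset.mem_Ico.1 hmIco).1
    have hmb : m < b := (Finset.mem_Ico.1 hmIco).2
    -- bound (i): ρ(a, m) ≤ T
    have hρam : Real.exp (-ε * gp Γ z (w a) (w m)) ≤ T := by
      rcases eq_or_lt_of_le ham with he | hlt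
      · rw [← he]
        have h1 : gp Γ z (w a) (w (a + 1)) ≤ gp Γ z (w a) (w a) := by
          rw [gp_self]
          exact gp_le_left Γ hconn z (w a) (w (a + 1))
        have h2 : Real.exp (-ε * gp Γ z (w a) (w a)) ≤ t a := by
          apply Real.exp_le_exp.2
          have := mul_le_mul_of_nonneg_left h1 hε.le
          nlinarith
        exact h2.trans (hsingle a (le_refl a) hab)
      · have := ih a m hlt (by omega)
        refine this.trans ?_
        have : ∑ i ∈ Finset.Ico a m, t i ≤ T / 2 := hmT
        linarith
    -- bound (ii): t m ≤ T
    have hρm : t m ≤ T := hsingle m ham hmb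
    -- bound (iii): ρ(m+1, b) ≤ T
    have hρmb : Real.exp (-ε * gp Γ z (w (m + 1)) (w b)) ≤ T := by
      rcases eq_or_lt_of_le (show m + 1 ≤ b by omega) with he | hlt
      · have h1 : gp Γ z (w m) (w (m + 1)) ≤ gp Γ z (w (m + 1)) (w (m + 1)) := by
          rw [gp_self]
          exact gp_le_right Γ hconn z (w m) (w (m + 1))
        have h2 : Real.exp (-ε * gp Γ z (w (m + 1)) (w (m + 1))) ≤ t m := by
          apply Real.exp_le_exp.2
          have := mul_le_mul_of_nonneg_left h1 hε.le
          nlinarith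
        have hgoal : Real.exp (-ε * gp Γ z (w (m + 1)) (w b)) =
            Real.exp (-ε * gp Γ z (w (m + 1)) (w (m + 1))) := by
          rw [← he]
        rw [hgoal]
        exact h2.trans hρm
      · have hnot : ¬ (∑ i ∈ Finset.Ico a (m + 1), t i ≤ T / 2) := by
          intro hcon
          have hmem : m + 1 ∈ S :=
            Finset.mem_filter.2 ⟨Finset.mem_Ico.2 ⟨by omega, hlt⟩, hcon⟩
          have := S.le_max' _ hmem
          omega
        push_neg at hnot
        have hsplit : ∑ i ∈ Finset.Ico a (m + 1), t i
            + ∑ i ∈ Finset.Ico (m + 1) b, t i = T :=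
          Finset.sum_Ico_consecutive _ (by omega) (by omega)
        have hhalf : ∑ i ∈ Finset.Ico (m + 1) b, t i ≤ T / 2 := by linarith
        have := ih (m + 1) b hlt (by omega)
        refine this.trans ?_
        linarith
    -- assemble
    have h1 := quasi (w a) (w m) (w b)
    have h2 := quasi (w m) (w (m + 1)) (w b)
    have hKT : Real.exp (-ε * gp Γ z (w m) (w b)) ≤ Real.exp (ε * δ / 2) * T := by
      refine h2.trans ?_
      apply mul_le_mul_of_nonneg_left _ hKpos.le
      exact max_le hρm hρmb
    have hmaxKT : max (Real.exp (-ε * gp Γ z (w a) (w m)))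
        (Real.exp (-ε * gp Γ z (w m) (w b))) ≤ Real.exp (ε * δ / 2) * T := by
      apply max_le
      · calc Real.exp (-ε * gp Γ z (w a) (w m)) ≤ T := hρam
          _ ≤ Real.exp (ε * δ / 2) * T := le_mul_of_one_le_left hTpos.le hK1
      · exact hKT
    calc Real.exp (-ε * gp Γ z (w a) (w b))
        ≤ Real.exp (ε * δ / 2) * max (Real.exp (-ε * gp Γ z (w a) (w m)))
            (Real.exp (-ε * gp Γ z (w m) (w b))) := h1
      _ ≤ Real.exp (ε * δ / 2) * (Real.exp (ε * δ / 2) * T) :=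
          mul_le_mul_of_nonneg_left hmaxKT hKpos.le
      _ = (Real.exp (ε * δ / 2) * Real.exp (ε * δ / 2)) * T := by ring
      _ ≤ 2 * T := mul_le_mul_of_nonneg_right hK2 hTpos.le

/-- On any walk, `d(x, getVert j) ≤ j`. -/
lemma dist_getVert_le (hconn : Γ.Connected) {x y : V} (W : Γ.Walk x y) :
    ∀ j : ℕ, Γ.dist x (W.getVert j) ≤ j := by
  intro j
  induction j with
  | zero => simp [SimpleGraph.Walk.getVert_zero, Γ.dist_self]
  | succ j ihj =>
    rcases lt_or_ge j W.length with hj | hj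
    · have hadj := W.adj_getVert_succ hj
      have htr : Γ.dist x (W.getVert (j + 1)) ≤
          Γ.dist x (W.getVert j) + Γ.dist (W.getVert j) (W.getVert (j + 1)) :=
        hconn.dist_triangle
      have h1 : Γ.dist (W.getVert j) (W.getVert (j + 1)) ≤ 1 := by
        simpa using SimpleGraph.dist_le hadj.toWalk
      omega
    · rw [W.getVert_of_length_le (show W.length ≤ j + 1 by omega)]
      have h := ihj
      rw [W.getVert_of_length_le hj] at h
      omega

/-- Existence of a point at prescribed distances on a geodesic from `x` to `y`. -/
lemma exists_geod_vert (hconn : Γ.Connected) (x y : V) {k : ℕ}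
    (hk : k ≤ Γ.dist x y) :
    ∃ z : V, Γ.dist x z = k ∧ Γ.dist x z + Γ.dist z y = Γ.dist x y := by
  obtain ⟨W, hW⟩ := hconn.exists_walk_length_eq_dist x y
  refine ⟨W.getVert k, ?_⟩
  have h1 : Γ.dist x (W.getVert k) ≤ k := dist_getVert_le Γ hconn W k
  have h2 : Γ.dist (W.getVert k) y ≤ Γ.dist x y - k := by
    have h3 := dist_getVert_le Γ hconn W.reverse (W.length - k)
    rw [SimpleGraph.Walk.getVert_reverse] at h3
    have h4 : W.length - (W.length - k) = k := by omega
    rw [h4] at h3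
    have h5 : Γ.dist (W.getVert k) y = Γ.dist y (W.getVert k) := Γ.dist_comm
    omega
  have htr : Γ.dist x y ≤ Γ.dist x (W.getVert k) + Γ.dist (W.getVert k) y :=
    hconn.dist_triangle
  omega

/-- Geometric series bound. -/
lemma geom_bound {η : ℝ} (hη : 0 < η) (a D : ℕ) :
    ∑ k ∈ Finset.range D, Real.exp (-η * |(a : ℝ) - (k : ℝ)|) ≤
      2 * (1 - Real.exp (-η))⁻¹ := by
  set q := Real.exp (-η) with hq
  have hq0 : 0 < q := Real.exp_pos _
  have hq1 : q < 1 := Real.exp_lt_one_iff.2 (by linarith)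
  have hsummable : Summable (fun n : ℕ => q ^ n) :=
    summable_geometric_of_lt_one hq0.le hq1
  have htsum : ∑' n : ℕ, q ^ n = (1 - q)⁻¹ := tsum_geometric_of_lt_one hq0.le hq1
  have hfinsum : ∀ s : Finset ℕ, ∑ j ∈ s, q ^ j ≤ (1 - q)⁻¹ := by
    intro s
    rw [← htsum]
    exact Summable.sum_le_tsum s (fun i _ => by positivity) hsummable
  have key : ∀ k : ℕ, Real.exp (-η * |(a : ℝ) - (k : ℝ)|) = q ^ (a - k) * q ^ (k - a) := by
    intro k
    rcases le_total a k with hle | hle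
    · have h1 : a - k = 0 := by omega
      have h2 : |(a : ℝ) - (k : ℝ)| = ((k - a : ℕ) : ℝ) := by
        rw [abs_sub_comm, Nat.cast_sub hle]
        rw [abs_of_nonneg]
        have : (a : ℝ) ≤ (k : ℝ) := by exact_mod_cast hle
        linarith
      rw [h1, pow_zero, one_mul, h2, ← Real.exp_nat_mul]
      ring_nf
    · have h1 : k - a = 0 := by omega
      have h2 : |(a : ℝ) - (k : ℝ)| = ((a - k : ℕ) : ℝ) := by
        rw [Nat.cast_sub hle]
        rw [abs_of_nonneg]
        have : (k : ℝ) ≤ (a : ℝ) := by exact_mod_cast hle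
        linarith
      rw [h1, pow_zero, mul_one, h2, ← Real.exp_nat_mul]
      ring_nf
  calc ∑ k ∈ Finset.range D, Real.exp (-η * |(a : ℝ) - (k : ℝ)|)
      = ∑ k ∈ (Finset.range D).filter (fun k => k ≤ a),
          Real.exp (-η * |(a : ℝ) - (k : ℝ)|)
        + ∑ k ∈ (Finset.range D).filter (fun k => ¬ k ≤ a),
          Real.exp (-η * |(a : ℝ) - (k : ℝ)|) :=
        (Finset.sum_filter_add_sum_filter_not _ _ _).symm
    _ ≤ (1 - q)⁻¹ + (1 - q)⁻¹ := by
        apply add_le_add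
        · have heq : ∀ k ∈ (Finset.range D).filter (fun k => k ≤ a),
              Real.exp (-η * |(a : ℝ) - (k : ℝ)|) = q ^ (a - k) := by
            intro k hk
            have hka : k ≤ a := (Finset.mem_filter.1 hk).2
            rw [key k]
            have : k - a = 0 := by omega
            rw [this, pow_zero, mul_one]
          rw [Finset.sum_congr rfl heq]
          have himg : ∑ k ∈ (Finset.range D).filter (fun k => k ≤ a), q ^ (a - k)
              = ∑ j ∈ ((Finset.range D).filter (fun k => k ≤ a)).image (fun k => a - k),
                  q ^ j := by
            rw [Finset.sum_image]
            intro x hx y hy hxy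
            have hxa : x ≤ a := (Finset.mem_filter.1 hx).2
            have hya : y ≤ a := (Finset.mem_filter.1 hy).2
            simp only at hxy
            omega
          rw [himg]
          exact hfinsum _
        · have heq : ∀ k ∈ (Finset.range D).filter (fun k => ¬ k ≤ a),
              Real.exp (-η * |(a : ℝ) - (k : ℝ)|) = q ^ (k - a) := by
            intro k hk
            have hka : ¬ k ≤ a := (Finset.mem_filter.1 hk).2
            rw [key k]
            have : a - k = 0 := by omega
            rw [this, pow_zero, one_mul]
          rw [Finset.sum_congr rfl heq]
          have himg : ∑ k ∈ (Finset.range D).filter (fun k => ¬ k ≤ a), q ^ (k - a)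
              = ∑ j ∈ ((Finset.range D).filter (fun k => ¬ k ≤ a)).image (fun k => k - a),
                  q ^ j := by
            rw [Finset.sum_image]
            intro x hx y hy hxy
            have hxa : ¬ x ≤ a := (Finset.mem_filter.1 hx).2
            have hya : ¬ y ≤ a := (Finset.mem_filter.1 hy).2
            simp only at hxy
            omega
          rw [himg]
          exact hfinsum _
    _ = 2 * (1 - q)⁻¹ := by ring

end Stmt11Aux

/-- Proposition 2.6: in a good discrete hyperbolic space there are `ε, β > 0`
such that for any path from `x` to `y`, `∑ e^{-ε d(x_i, géod(x,y))} ≥ β d(x,y)`. -/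
theorem stmt11 {V : Type*} (Γ : SimpleGraph V) (hconn : Γ.Connected)
    (hulf : ∃ N : ℕ, ∀ v : V, {u : V | Γ.Adj v u}.Finite ∧
      {u : V | Γ.Adj v u}.ncard ≤ N)
    (hhyp : ∃ δ : ℝ, 0 ≤ δ ∧ ∀ a b c d : V,
      (Γ.dist a c : ℝ) + Γ.dist b d ≤
        max ((Γ.dist a d : ℝ) + Γ.dist b c) ((Γ.dist a b : ℝ) + Γ.dist c d) + δ) :
    ∃ ε : ℝ, 0 < ε ∧ ∃ β : ℝ, 0 < β ∧
      ∀ (x y : V) (n : ℕ) (p : ℕ → V), p 0 = x → p n = y →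
        (∀ i < n, Γ.Adj (p i) (p (i + 1))) →
        β * Γ.dist x y ≤
          ∑ i ∈ Finset.range n, Real.exp (-ε * dGeod Γ x y (p i)) := by
  classical
  obtain ⟨δ, hδ0, h4⟩ := hhyp
  have hδ1 : (0:ℝ) < δ + 1 := by linarith
  have hlog2 : (0:ℝ) < Real.log 2 := Real.log_pos (by norm_num)
  set ε := Real.log 2 / (δ + 1) with hεdef
  have hε : 0 < ε := div_pos hlog2 hδ1
  have hεδ : ε * δ ≤ Real.log 2 := by
    rw [hεdef, div_mul_eq_mul_div, div_le_iff₀ hδ1]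
    nlinarith
  set η := ε / 2 with hηdef
  have hη : 0 < η := by positivity
  set q := Real.exp (-η) with hqdef
  have hq0 : 0 < q := Real.exp_pos _
  have hq1 : q < 1 := Real.exp_lt_one_iff.2 (by linarith)
  have hexpε : (0:ℝ) < Real.exp ε := Real.exp_pos _
  set β := (1 - q) / (4 * Real.exp ε) with hβdef
  have hβ : 0 < β := div_pos (by linarith) (by positivity)
  refine ⟨η, hη, β, hβ, ?_⟩
  intro x y n p hp0 hpn hadj
  set D := Γ.dist x y with hD
  by_cases hD0 : D = 0
  · rw [hD0]
    push_cast
    rw [mul_zero]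
    exact Finset.sum_nonneg fun i _ => (Real.exp_pos _).le
  · -- n ≥ 1
    have hn : n ≠ 0 := by
      intro h0
      apply hD0
      rw [h0] at hpn
      rw [hD, ← hp0, hpn, Γ.dist_self]
    -- Claim 1: for each k < D the "band sum" is at least 1/(2 e^ε)
    have claim1 : ∀ k, k < D →
        1 ≤ 2 * Real.exp ε * ∑ i ∈ Finset.range n,
          Real.exp (-η * (dGeod Γ x y (p i) : ℝ)) *
            Real.exp (-η * |(Γ.dist x (p i) : ℝ) - (k : ℝ)|) := by
      intro k hk
      obtain ⟨z, hz1, hz2⟩ := Stmt11Aux.exists_geod_vert Γ hconn x y (le_of_lt hk)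
      have hzgeod : z ∈ geodSet Γ x y := hz2
      -- the chain lemma applied to the whole path
      have hch := Stmt11Aux.chain Γ hconn h4 hδ0 hε hεδ z p n 0 n
        (Nat.pos_of_ne_zero hn) (by omega)
      have hgp0 : Stmt11Aux.gp Γ z (p 0) (p n) = 0 := by
        rw [hp0, hpn]
        unfold Stmt11Aux.gp
        have hc : Γ.dist y z = Γ.dist z y := Γ.dist_comm
        rw [hc]
        have : (Γ.dist x z : ℝ) + (Γ.dist z y : ℝ) = (Γ.dist x y : ℝ) := by
          exact_mod_cast hz2
        rw [hD] at *
        linarith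
      rw [hgp0, mul_zero, Real.exp_zero, ← Finset.range_eq_Ico] at hch
      -- per-term bound
      have hterm : ∀ i ∈ Finset.range n,
          Real.exp (-ε * Stmt11Aux.gp Γ z (p i) (p (i + 1))) ≤
            Real.exp ε * (Real.exp (-η * (dGeod Γ x y (p i) : ℝ)) *
              Real.exp (-η * |(Γ.dist x (p i) : ℝ) - (k : ℝ)|)) := by
        intro i hi
        have hin : i < n := Finset.mem_range.1 hi
        have hadji := hadj i hin
        have hd1 : Γ.dist (p i) (p (i + 1)) ≤ 1 := by
          simpa using SimpleGraph.dist_le hadji.toWalk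
        have htr : Γ.dist (p i) z ≤ Γ.dist (p i) (p (i + 1)) + Γ.dist (p (i + 1)) z :=
          hconn.dist_triangle
        -- gp ≥ d(p i, z) - 1
        have hgplb : (Γ.dist (p i) z : ℝ) - 1 ≤ Stmt11Aux.gp Γ z (p i) (p (i + 1)) := by
          unfold Stmt11Aux.gp
          have h1 : (Γ.dist (p i) z : ℝ) ≤
              (Γ.dist (p i) (p (i + 1)) : ℝ) + (Γ.dist (p (i + 1)) z : ℝ) := by
            exact_mod_cast htr
          have h2 : (Γ.dist (p i) (p (i + 1)) : ℝ) ≤ 1 := by exact_mod_cast hd1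
          linarith
        -- dGeod ≤ d(p i, z)
        have hr : dGeod Γ x y (p i) ≤ Γ.dist (p i) z :=
          Nat.sInf_le ⟨z, hzgeod, rfl⟩
        have hrR : (dGeod Γ x y (p i) : ℝ) ≤ (Γ.dist (p i) z : ℝ) := by
          exact_mod_cast hr
        -- |a_i - k| ≤ d(p i, z)
        have habs : |(Γ.dist x (p i) : ℝ) - (k : ℝ)| ≤ (Γ.dist (p i) z : ℝ) := by
          rw [abs_le]
          constructor
          · have h1 : Γ.dist x z ≤ Γ.dist x (p i) + Γ.dist (p i) z :=
              hconn.dist_triangle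
            rw [hz1] at h1
            have : (k : ℝ) ≤ (Γ.dist x (p i) : ℝ) + (Γ.dist (p i) z : ℝ) := by
              exact_mod_cast h1
            linarith
          · have h1 : Γ.dist x (p i) ≤ Γ.dist x z + Γ.dist z (p i) :=
              hconn.dist_triangle
            have h2 : Γ.dist z (p i) = Γ.dist (p i) z := Γ.dist_comm
            rw [hz1, h2] at h1
            have : (Γ.dist x (p i) : ℝ) ≤ (k : ℝ) + (Γ.dist (p i) z : ℝ) := by
              exact_mod_cast h1
            linarith
        rw [← Real.exp_add, ← Real.exp_add]
        apply Real.exp_le_exp.2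
        have h3 : -ε * Stmt11Aux.gp Γ z (p i) (p (i + 1)) ≤
            ε - ε * (Γ.dist (p i) z : ℝ) := by
          nlinarith [mul_le_mul_of_nonneg_left hgplb hε.le]
        have h4' : η * (dGeod Γ x y (p i) : ℝ) +
            η * |(Γ.dist x (p i) : ℝ) - (k : ℝ)| ≤ ε * (Γ.dist (p i) z : ℝ) := by
          have e1 := mul_le_mul_of_nonneg_left hrR hη.le
          have e2 := mul_le_mul_of_nonneg_left habs hη.le
          rw [hηdef] at *
          linarith
        linarith
      have hsumle := Finset.sum_le_sum hterm
      rw [← Finset.mul_sum] at hsumle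
      calc (1:ℝ) ≤ 2 * ∑ i ∈ Finset.range n,
            Real.exp (-ε * Stmt11Aux.gp Γ z (p i) (p (i + 1))) := hch
        _ ≤ 2 * (Real.exp ε * ∑ i ∈ Finset.range n,
            Real.exp (-η * (dGeod Γ x y (p i) : ℝ)) *
              Real.exp (-η * |(Γ.dist x (p i) : ℝ) - (k : ℝ)|)) := by
            apply mul_le_mul_of_nonneg_left hsumle (by norm_num)
        _ = 2 * Real.exp ε * ∑ i ∈ Finset.range n,
            Real.exp (-η * (dGeod Γ x y (p i) : ℝ)) *
              Real.exp (-η * |(Γ.dist x (p i) : ℝ) - (k : ℝ)|) := by ring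
    -- Sum claim1 over k < D
    have hDsum : (D : ℝ) ≤ 2 * Real.exp ε * ∑ k ∈ Finset.range D,
        ∑ i ∈ Finset.range n,
          Real.exp (-η * (dGeod Γ x y (p i) : ℝ)) *
            Real.exp (-η * |(Γ.dist x (p i) : ℝ) - (k : ℝ)|) := by
      rw [Finset.mul_sum]
      calc (D : ℝ) = ∑ _k ∈ Finset.range D, (1:ℝ) := by
            rw [Finset.sum_const, Finset.card_range]; simp
        _ ≤ ∑ k ∈ Finset.range D, 2 * Real.exp ε * ∑ i ∈ Finset.range n,
            Real.exp (-η * (dGeod Γ x y (p i) : ℝ)) *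
              Real.exp (-η * |(Γ.dist x (p i) : ℝ) - (k : ℝ)|) :=
            Finset.sum_le_sum fun k hk => claim1 k (Finset.mem_range.1 hk)
    -- swap sums and use the geometric bound
    have hswap : ∑ k ∈ Finset.range D, ∑ i ∈ Finset.range n,
        Real.exp (-η * (dGeod Γ x y (p i) : ℝ)) *
          Real.exp (-η * |(Γ.dist x (p i) : ℝ) - (k : ℝ)|)
        ≤ (2 * (1 - q)⁻¹) * ∑ i ∈ Finset.range n,
            Real.exp (-η * (dGeod Γ x y (p i) : ℝ)) := by
      rw [Finset.sum_comm, Finset.mul_sum]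
      apply Finset.sum_le_sum
      intro i _
      rw [← Finset.mul_sum]
      calc Real.exp (-η * (dGeod Γ x y (p i) : ℝ)) *
            ∑ k ∈ Finset.range D, Real.exp (-η * |(Γ.dist x (p i) : ℝ) - (k : ℝ)|)
          ≤ Real.exp (-η * (dGeod Γ x y (p i) : ℝ)) * (2 * (1 - q)⁻¹) := by
            apply mul_le_mul_of_nonneg_left _ (Real.exp_pos _).le
            exact Stmt11Aux.geom_bound hη (Γ.dist x (p i)) D
        _ = (2 * (1 - q)⁻¹) * Real.exp (-η * (dGeod Γ x y (p i) : ℝ)) := by ring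
    -- conclude
    set Sf := ∑ i ∈ Finset.range n, Real.exp (-η * (dGeod Γ x y (p i) : ℝ)) with hSf
    have hfinal : (D : ℝ) ≤ 2 * Real.exp ε * ((2 * (1 - q)⁻¹) * Sf) := by
      refine hDsum.trans ?_
      apply mul_le_mul_of_nonneg_left hswap (by positivity)
    have hcoef : 2 * Real.exp ε * (2 * (1 - q)⁻¹) * β = 1 := by
      have h1 : (1 - q) ≠ 0 := by linarith
      have h2 : Real.exp ε ≠ 0 := hexpε.ne'
      have h3 : 2 * Real.exp ε * (2 * (1 - q)⁻¹) * ((1 - q) / (4 * Real.exp ε))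
          = ((1 - q)⁻¹ * (1 - q)) * (Real.exp ε / Real.exp ε) := by ring
      rw [hβdef, h3, inv_mul_cancel₀ h1, div_self h2, one_mul]
    calc β * (D : ℝ) ≤ β * (2 * Real.exp ε * ((2 * (1 - q)⁻¹) * Sf)) :=
          mul_le_mul_of_nonneg_left hfinal hβ.le
      _ = (2 * Real.exp ε * (2 * (1 - q)⁻¹) * β) * Sf := by ring
      _ = Sf := by rw [hcoef]; ring
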